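/- For any symmetric Kac–Moody Dynkin diagram Γ and any Weyl group element u with reduced word i, there exists a sign function ε assigning +1 or −1 to each face of the BFZ quiver Q^{u,e} such that the potential S = Σ_F ε(F)·w_F (the signed sum of the faces, i.e., the superpotential 'clockwise faces minus anticlockwise faces') is rigid: every cyclic monomial of Q^{u,e} is cyclically equivalent to an element of the Jacobian ideal J(S). -/

import Mathlib

/-!  Berenstein–Fomin–Zelevinsky quivers `Q^{u,e}` as combinatorial data.

`r` is the number of nodes of the Dynkin diagram `Γ` (a finite simple graph whose
relevant nodes are `1, …, r`), `n` is the length of the reduced word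
`i = (i_1, …, i_n)` for the Weyl group element `u` (and `v = e`, so every letter has
sign `-1`), `node k = i_k` is the node of the letter at position `k` (extended by
`node (-p) = p` for `p = 1, …, r`), and `succ k = k⁺` is the successor map. -/
structure BFZe where
  r : ℤ
  n : ℤ
  Γ : SimpleGraph ℤ
  node : ℤ → ℤ
  succ : ℤ → ℤ

namespace BFZe

variable (S : BFZe)

/-- The index (vertex) set `[-r, -1] ∪ [1, n]`. -/
def Idx (k : ℤ) : Prop := (-S.r ≤ k ∧ k ≤ -1) ∨ (1 ≤ k ∧ k ≤ S.n)

/-- The axioms on the data: `r ≥ 1`, `node (-p) = p`, the nodes of the letters lie in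
`{1, …, r}`, and `succ k` is the least index `l > k` with `node l = node k`, or
`n + 1` if there is no such index. -/
def Valid : Prop :=
  1 ≤ S.r ∧ 0 ≤ S.n ∧
  (∀ p : ℤ, 1 ≤ p → p ≤ S.r → S.node (-p) = p) ∧
  (∀ k : ℤ, 1 ≤ k → k ≤ S.n → 1 ≤ S.node k ∧ S.node k ≤ S.r) ∧
  (∀ k : ℤ, S.Idx k →
    k < S.succ k ∧ S.succ k ≤ S.n + 1 ∧
    (S.succ k ≤ S.n → S.Idx (S.succ k) ∧ S.node (S.succ k) = S.node k) ∧
    (∀ l : ℤ, S.Idx l → k < l → S.node l = S.node k → S.succ k ≤ l))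

open scoped Classical in
/-- The Coxeter matrix of the Weyl group of the symmetric Kac–Moody algebra with
Dynkin diagram `Γ`:  `m_{ab} = 3` if `a` and `b` are adjacent in `Γ` and `m_{ab} = 2`
otherwise (for `a ≠ b`). -/
noncomputable def coxeterMatrix : CoxeterMatrix ℤ where
  M := Matrix.of fun a b : ℤ => if a = b then 1 else if S.Γ.Adj a b then 3 else 2
  isSymm := by
    rw [Matrix.IsSymm]
    ext a b
    by_cases h : a = b
    · simp [h]
    · simp only [Matrix.transpose_apply, Matrix.of_apply, if_neg h, if_neg (Ne.symm h)]
      rw [S.Γ.adj_comm]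
  diagonal := by intro b; simp
  off_diagonal := by
    intro a b h
    simp only [Matrix.of_apply, if_neg h]
    split <;> omega

/-- The word `(i_1, …, i_n)`, as a list of nodes of `Γ`. -/
def word : List ℤ := (List.range S.n.toNat).map (fun j => S.node ((j : ℤ) + 1))

/-- The word `i` is a reduced word (for the Weyl group element `u`) in the Weyl
(Coxeter) group associated to `Γ`. -/
noncomputable def Reduced : Prop :=
  (CoxeterMatrix.toCoxeterSystem S.coxeterMatrix).IsReduced S.word

/-- There is a horizontal arrow from `x` to `y`:  these are the arrows `k⁺ → k` for
`k` in the index set with `k⁺ ≤ n`. -/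
def HorArrow (x y : ℤ) : Prop := S.Idx y ∧ x = S.succ y ∧ x ≤ S.n

/-- There is an inclined arrow from `x` to `y`:  these are the arrows `k → l` with
`|i_k|` and `|i_l|` adjacent in `Γ` and `k < l < k⁺ < l⁺`. -/
def InclArrow (x y : ℤ) : Prop :=
  S.Idx x ∧ S.Idx y ∧ S.Γ.Adj (S.node x) (S.node y) ∧
  x < y ∧ y < S.succ x ∧ S.succ x < S.succ y

/-- The arrows of the BFZ quiver `Q^{u,e}`. -/
def Arrow (x y : ℤ) : Prop := S.HorArrow x y ∨ S.InclArrow x y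

/-- A face of `Q^{u,e}`: a chordless cycle `c : ZMod N → ℤ` (with `N ≥ 3`) of the
underlying undirected graph, i.e. consecutive vertices are joined by an arrow and no
arrow of `Q^{u,e}` joins two non-consecutive vertices. -/
def IsFace {N : ℕ} (c : ZMod N → ℤ) : Prop :=
  3 ≤ N ∧ Function.Injective c ∧
  (∀ t : ZMod N, S.Arrow (c t) (c (t + 1)) ∨ S.Arrow (c (t + 1)) (c t)) ∧
  (∀ s t : ZMod N, s ≠ t → t ≠ s + 1 → s ≠ t + 1 → ¬ S.Arrow (c s) (c t))

/-- `Γ` is the path graph (type `A_r` Dynkin diagram) on `{1, …, r}`. -/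
def IsPathGraph : Prop :=
  ∀ a b : ℤ, S.Γ.Adj a b ↔
    (1 ≤ a ∧ 1 ≤ b ∧ a ≤ S.r ∧ b ≤ S.r ∧ (b = a + 1 ∨ a = b + 1))

/-- The type of arrows of the quiver `Q^{u,e}`. -/
def Arr : Type := { p : ℤ × ℤ // S.Arrow p.1 p.2 }

/-- The source vertex of an arrow. -/
def asrc (e : S.Arr) : ℤ := e.1.1

/-- The target vertex of an arrow. -/
def atgt (e : S.Arr) : ℤ := e.1.2

/-- The product in the free associative `ℂ`-algebra on the arrows corresponding to a
list of arrows (the monomial of a path). -/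
noncomputable def pathProd (L : List S.Arr) : FreeAlgebra ℂ S.Arr :=
  (L.map (FreeAlgebra.ι ℂ)).prod

/-- A list of arrows is a path: consecutive arrows are composable. -/
def IsPathList (L : List S.Arr) : Prop :=
  L.Chain' (fun e f => S.atgt e = S.asrc f)

/-- A nonempty composable list of arrows closing up to a cycle; its monomial
`e_1 ⋯ e_N` is a cyclic monomial. -/
def IsCycList (L : List S.Arr) : Prop :=
  L ≠ [] ∧ S.IsPathList L ∧
  ∀ e ∈ L.head?, ∀ f ∈ L.getLast?, S.atgt f = S.asrc e

/-- The linear span of all `w - rot w` for cyclic monomials `w`; two elements of the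
free algebra are cyclically equivalent iff their difference lies in this span. -/
noncomputable def cycSpan : Submodule ℂ (FreeAlgebra ℂ S.Arr) :=
  Submodule.span ℂ
    {x | ∃ L : List S.Arr, S.IsCycList L ∧ x = S.pathProd L - S.pathProd (L.rotate 1)}

open scoped Classical in
/-- The cyclic derivative with respect to the arrow `a` of the cyclic monomial given
by the list `L = e_1 ⋯ e_N`:  `∑_{j : e_j = a} e_{j+1} ⋯ e_N e_1 ⋯ e_{j-1}`. -/
noncomputable def cycDeriv (a : S.Arr) (L : List S.Arr) : FreeAlgebra ℂ S.Arr :=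
  ∑ j ∈ Finset.range L.length,
    if L[j]? = some a then S.pathProd (L.drop (j + 1) ++ L.take j) else 0

/-- A face of `Q^{u,e}` as a directed cyclic list of arrows: a directed cycle visiting
no vertex twice such that any arrow of `Q^{u,e}` joining two of its vertices is one of
the (cyclically consecutive) arrows of the cycle, i.e. the cycle is chordless in the
underlying undirected graph. -/
def IsFaceList (L : List S.Arr) : Prop :=
  S.IsCycList L ∧ (L.map S.asrc).Nodup ∧
  ∀ x y : ℤ, x ∈ L.map S.asrc → y ∈ L.map S.asrc → S.Arrow x y →
    ∃ e ∈ L, S.asrc e = x ∧ S.atgt e = y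

/-- `FS` is a complete set of representatives of the faces of `Q^{u,e}`, each face
being listed exactly once up to rotation. -/
def FaceReps (FS : Finset (List S.Arr)) : Prop :=
  (∀ L ∈ FS, S.IsFaceList L) ∧
  (∀ L : List S.Arr, S.IsFaceList L → ∃ L' ∈ FS, ∃ j : ℕ, L.rotate j = L') ∧
  (∀ L ∈ FS, ∀ L' ∈ FS, (∃ j : ℕ, L.rotate j = L') → L = L')

/-- The cyclic derivative with respect to the arrow `a` of the potential
`∑_L eps L • w_L`, `L` ranging over the face representatives `FS`. -/
noncomputable def potDeriv (FS : Finset (List S.Arr)) (eps : List S.Arr → ℂ)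
    (a : S.Arr) : FreeAlgebra ℂ S.Arr :=
  ∑ L ∈ FS, eps L • S.cycDeriv a L

/-- The Jacobian ideal of the potential `∑_L eps L • w_L`: the two-sided ideal
generated by its cyclic derivatives. -/
noncomputable def jacIdeal (FS : Finset (List S.Arr)) (eps : List S.Arr → ℂ) :
    Submodule ℂ (FreeAlgebra ℂ S.Arr) :=
  Submodule.span ℂ
    {x | ∃ (p q : FreeAlgebra ℂ S.Arr) (a : S.Arr), x = p * S.potDeriv FS eps a * q}

/-- The quiver with potential `(Q^{u,e}, ∑_L eps L • w_L)` is rigid: every cyclic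
monomial is cyclically equivalent to an element of the Jacobian ideal. -/
def IsRigid (FS : Finset (List S.Arr)) (eps : List S.Arr → ℂ) : Prop :=
  ∀ L : List S.Arr, S.IsCycList L →
    ∃ y ∈ S.jacIdeal FS eps, S.pathProd L - y ∈ S.cycSpan

/-- The data describing the faces of `Q^{u,e}` in the path-graph (type A) case:
`aF L` is the node of the string containing all but one vertex of the face `L`, and
`bF L` is the node of the string containing the remaining lone vertex. -/
def FaceNodes (FS : Finset (List S.Arr)) (aF bF : List S.Arr → ℤ) : Prop :=
  ∀ L ∈ FS,
    S.Γ.Adj (aF L) (bF L) ∧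
    (∀ x ∈ L.map S.asrc, S.node x = aF L ∨ S.node x = bF L) ∧
    (∃! x, x ∈ L.map S.asrc ∧ S.node x = bF L)

/-- The orientation sign `ε(F)` of a face: `+1` if `b(F) > a(F)`, `-1` otherwise. -/
noncomputable def faceEps (aF bF : List S.Arr → ℤ) (L : List S.Arr) : ℂ :=
  if aF L < bF L then 1 else -1

/-! ### Auxiliary machinery for the proof -/

section Aux

lemma valid_succ_gt (hS : S.Valid) {k : ℤ} (h : S.Idx k) : k < S.succ k :=
  (hS.2.2.2.2 k h).1

lemma valid_succ_idx (hS : S.Valid) {k : ℤ} (h : S.Idx k) (h2 : S.succ k ≤ S.n) :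
    S.Idx (S.succ k) ∧ S.node (S.succ k) = S.node k :=
  (hS.2.2.2.2 k h).2.2.1 h2

lemma valid_succ_min (hS : S.Valid) {k : ℤ} (h : S.Idx k) {l : ℤ} (hl : S.Idx l)
    (hkl : k < l) (hn : S.node l = S.node k) : S.succ k ≤ l :=
  (hS.2.2.2.2 k h).2.2.2 l hl hkl hn

lemma hor_facts (hS : S.Valid) {x y : ℤ} (h : S.HorArrow x y) :
    S.Idx y ∧ S.Idx x ∧ y < x ∧ S.node x = S.node y ∧ x = S.succ y ∧ x ≤ S.n := by
  obtain ⟨hy, hxy, hxn⟩ := h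
  have h2 := valid_succ_idx S hS hy (hxy ▸ hxn)
  exact ⟨hy, hxy ▸ h2.1, hxy ▸ valid_succ_gt S hS hy, by rw [hxy]; exact h2.2, hxy, hxn⟩

lemma incl_facts (hS : S.Valid) {x y : ℤ} (h : S.InclArrow x y) :
    S.Idx x ∧ S.Idx y ∧ x < y ∧ S.node x ≠ S.node y ∧
      y < S.succ x ∧ S.succ x < S.succ y ∧ S.Γ.Adj (S.node x) (S.node y) :=
  ⟨h.1, h.2.1, h.2.2.2.1, h.2.2.1.ne, h.2.2.2.2.1, h.2.2.2.2.2, h.2.2.1⟩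

/-- Dichotomy: an arrow is horizontal iff its endpoints have equal nodes. -/
lemma arrow_dichotomy (hS : S.Valid) (e : S.Arr) :
    (S.HorArrow (S.asrc e) (S.atgt e) ∧ S.node (S.asrc e) = S.node (S.atgt e)) ∨
    (S.InclArrow (S.asrc e) (S.atgt e) ∧ S.node (S.asrc e) ≠ S.node (S.atgt e)) := by
  rcases e.2 with h | h
  · exact Or.inl ⟨h, (hor_facts S hS h).2.2.2.1⟩
  · exact Or.inr ⟨h, (incl_facts S hS h).2.2.2.1⟩

lemma arrow_src_idx (hS : S.Valid) (e : S.Arr) : S.Idx (S.asrc e) := by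
  rcases e.2 with h | h
  · exact (hor_facts S hS h).2.1
  · exact h.1

lemma arrow_tgt_idx (hS : S.Valid) (e : S.Arr) : S.Idx (S.atgt e) := by
  rcases e.2 with h | h
  · exact h.1
  · exact h.2.1

lemma idx_lb (hS : S.Valid) {k : ℤ} (h : S.Idx k) : -S.r ≤ k := by
  have h1 := hS.1
  rcases h with ⟨h2, h3⟩ | ⟨h2, h3⟩ <;> omega

lemma idx_ub (hS : S.Valid) {k : ℤ} (h : S.Idx k) : k ≤ S.n := by
  have h1 := hS.2.1
  rcases h with ⟨h2, h3⟩ | ⟨h2, h3⟩ <;> omega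

/-- Arrows are determined by their endpoints. -/
lemma arr_ext {e f : S.Arr} (hs : S.asrc e = S.asrc f) (ht : S.atgt e = S.atgt f) : e = f := by
  apply Subtype.ext
  exact Prod.ext hs ht

/-- Arrows with the same source in a list with nodup sources are equal. -/
lemma nodup_src_unique {L : List S.Arr} (h : (L.map S.asrc).Nodup)
    {e f : S.Arr} (he : e ∈ L) (hf : f ∈ L) (hsrc : S.asrc e = S.asrc f) : e = f := by
  induction L with
  | nil => simp at he
  | cons x t ih =>
    simp only [List.map_cons, List.nodup_cons] at h
    rcases List.mem_cons.mp he with rfl | he' <;> rcases List.mem_cons.mp hf with rfl | hf'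
    · rfl
    · exact absurd (hsrc ▸ List.mem_map_of_mem (f := S.asrc) hf') h.1
    · exact absurd (hsrc ▸ List.mem_map_of_mem (f := S.asrc) he') h.1
    · exact ih h.2 he' hf'

/-- Choose an element maximizing an integer-valued function on a nonempty list. -/
lemma exists_max_on_list {α : Type*} (f : α → ℤ) {l : List α} (h : l ≠ []) :
    ∃ a ∈ l, ∀ b ∈ l, f b ≤ f a := by
  induction l with
  | nil => exact absurd rfl h
  | cons x t ih =>
    rcases eq_or_ne t [] with rfl | ht
    · refine ⟨x, by simp, ?_⟩
      intro b hb
      simp only [List.mem_singleton] at hb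
      simp [hb]
    · obtain ⟨a, ha, hmax⟩ := ih ht
      rcases le_total (f a) (f x) with h1 | h1
      · refine ⟨x, by simp, ?_⟩
        intro b hb
        rcases List.mem_cons.mp hb with rfl | hb'
        · exact le_rfl
        · exact le_trans (hmax b hb') h1
      · refine ⟨a, List.mem_cons_of_mem _ ha, ?_⟩
        intro b hb
        rcases List.mem_cons.mp hb with rfl | hb'
        · exact h1
        · exact hmax b hb'

end Aux

/-- `HChain S x l`: `l` is a horizontal chain of arrows starting at vertex `x`. -/
def HChain (T : BFZe) : ℤ → List T.Arr → Prop
  | _, [] => True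
  | x, e :: t => T.asrc e = x ∧ T.HorArrow (T.asrc e) (T.atgt e) ∧ HChain T (T.atgt e) t

/-- The final vertex of a chain of arrows starting at `x`. -/
def HEnd (T : BFZe) : ℤ → List T.Arr → ℤ
  | x, [] => x
  | _, e :: t => HEnd T (T.atgt e) t

@[simp] lemma hchain_nil {x : ℤ} : S.HChain x ([] : List S.Arr) := trivial

lemma hchain_cons {x : ℤ} {e : S.Arr} {t : List S.Arr} :
    S.HChain x (e :: t) ↔
      S.asrc e = x ∧ S.HorArrow (S.asrc e) (S.atgt e) ∧ S.HChain (S.atgt e) t :=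
  Iff.rfl

@[simp] lemma hend_nil {x : ℤ} : S.HEnd x ([] : List S.Arr) = x := rfl

@[simp] lemma hend_cons {x : ℤ} {e : S.Arr} {t : List S.Arr} :
    S.HEnd x (e :: t) = S.HEnd (S.atgt e) t := rfl

lemma hchain_append {x : ℤ} {p q : List S.Arr} :
    S.HChain x (p ++ q) ↔ S.HChain x p ∧ S.HChain (S.HEnd x p) q := by
  induction p generalizing x with
  | nil => simp
  | cons e t ih =>
    simp only [List.cons_append, hchain_cons, hend_cons, ih, and_assoc]

lemma hend_append {x : ℤ} {p q : List S.Arr} :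
    S.HEnd x (p ++ q) = S.HEnd (S.HEnd x p) q := by
  induction p generalizing x with
  | nil => simp
  | cons e t ih => simp only [List.cons_append, hend_cons, ih]

lemma hend_concat {x : ℤ} {l : List S.Arr} {e : S.Arr} :
    S.HEnd x (l ++ [e]) = S.atgt e := by
  rw [hend_append, hend_cons, hend_nil]

lemma hend_le (hS : S.Valid) {x : ℤ} {l : List S.Arr} (h : S.HChain x l) :
    S.HEnd x l ≤ x := by
  induction l generalizing x with
  | nil => exact le_rfl
  | cons e t ih =>
    obtain ⟨h1, h2, h3⟩ := (hchain_cons S).mp h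
    have d1 := (hor_facts S hS h2).2.2.1
    have d2 := ih h3
    rw [hend_cons]
    omega

lemma hend_node (hS : S.Valid) {x : ℤ} {l : List S.Arr} (h : S.HChain x l) :
    S.node (S.HEnd x l) = S.node x := by
  induction l generalizing x with
  | nil => rfl
  | cons e t ih =>
    obtain ⟨h1, h2, h3⟩ := (hchain_cons S).mp h
    have h4 := (hor_facts S hS h2).2.2.2.1
    rw [hend_cons, ih h3, ← h4, h1]

lemma hchain_mem_facts (hS : S.Valid) {x : ℤ} {l : List S.Arr} (h : S.HChain x l) :
    ∀ e ∈ l, S.atgt e < S.asrc e ∧ S.asrc e ≤ x ∧ S.node (S.asrc e) = S.node x ∧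
      S.node (S.atgt e) = S.node x ∧ S.HorArrow (S.asrc e) (S.atgt e) := by
  induction l generalizing x with
  | nil => intro e he; simp at he
  | cons f t ih =>
    intro e he
    obtain ⟨h1, h2, h3⟩ := (hchain_cons S).mp h
    have hf := hor_facts S hS h2
    rcases List.mem_cons.mp he with rfl | he'
    · exact ⟨hf.2.2.1, le_of_eq h1, by rw [h1], by rw [← hf.2.2.2.1, h1], h2⟩
    · obtain ⟨c1, c2, c3, c4, c5⟩ := ih h3 e he'
      have hn : S.node (S.atgt f) = S.node x := by rw [← hf.2.2.2.1, h1]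
      have d1 := hf.2.2.1
      exact ⟨c1, by omega, by rw [c3, hn], by rw [c4, hn], c5⟩

lemma hchain_src_pairwise (hS : S.Valid) {x : ℤ} {l : List S.Arr} (h : S.HChain x l) :
    (l.map S.asrc).Pairwise (fun a b => b < a) := by
  induction l generalizing x with
  | nil => simp
  | cons e t ih =>
    obtain ⟨h1, h2, h3⟩ := (hchain_cons S).mp h
    simp only [List.map_cons, List.pairwise_cons]
    constructor
    · intro b hb
      obtain ⟨f, hf, rfl⟩ := List.mem_map.mp hb
      have c1 := (hchain_mem_facts S hS h3 f hf).1
      have c2 := (hchain_mem_facts S hS h3 f hf).2.1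
      have d1 := (hor_facts S hS h2).2.2.1
      omega
    · exact ih h3

/-- A horizontal arrow is determined by its source. -/
lemma hor_unique (hS : S.Valid) {x y y' : ℤ} (h : S.HorArrow x y) (h' : S.HorArrow x y') :
    y = y' := by
  have hf := hor_facts S hS h
  have hf' := hor_facts S hS h'
  by_contra hne
  rcases lt_or_gt_of_ne hne with hlt | hlt
  · have := valid_succ_min S hS hf.1 hf'.1 hlt (by rw [← hf.2.2.2.1, ← hf'.2.2.2.1])
    have e1 := hf.2.2.2.2.1
    have e2 := hf'.2.2.2.2.1
    omega
  · have := valid_succ_min S hS hf'.1 hf.1 hlt (by rw [← hf.2.2.2.1, ← hf'.2.2.2.1])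
    have e1 := hf.2.2.2.2.1
    have e2 := hf'.2.2.2.2.1
    omega

/-- Horizontal chains with prescribed endpoints are unique. -/
lemma hchain_unique (hS : S.Valid) {a : ℤ} {l : List S.Arr} :
    ∀ {x : ℤ} {l' : List S.Arr}, S.HChain x l → S.HEnd x l = a →
      S.HChain x l' → S.HEnd x l' = a → l = l' := by
  induction l with
  | nil =>
    intro x l' _ he h' he'
    rw [hend_nil] at he
    cases l' with
    | nil => rfl
    | cons f t =>
      obtain ⟨h1, h2, h3⟩ := (hchain_cons S).mp h'
      have d1 := hend_le S hS h3
      have d2 := (hor_facts S hS h2).2.2.1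
      rw [hend_cons] at he'
      omega
  | cons e t ih =>
    intro x l' h he h' he'
    obtain ⟨h1, h2, h3⟩ := (hchain_cons S).mp h
    cases l' with
    | nil =>
      have d1 := hend_le S hS h3
      have d2 := (hor_facts S hS h2).2.2.1
      rw [hend_cons] at he
      rw [hend_nil] at he'
      omega
    | cons f t' =>
      obtain ⟨h1', h2', h3'⟩ := (hchain_cons S).mp h'
      have hsrc : S.asrc e = S.asrc f := by rw [h1, h1']
      have htgt : S.atgt e = S.atgt f := hor_unique S hS h2 (hsrc ▸ h2')
      have hef : e = f := arr_ext S hsrc htgt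
      subst hef
      rw [hend_cons] at he he'
      rw [ih h3 he h3' he']

lemma cyc_rotate_one {W : List S.Arr} (h : S.IsCycList W) : S.IsCycList (W.rotate 1) := by
  obtain ⟨hne, hp, hc⟩ := h
  cases W with
  | nil => exact absurd rfl hne
  | cons x xs =>
    rw [List.rotate_cons_succ, List.rotate_zero]
    cases xs with
    | nil => exact ⟨by simp, by simp [IsPathList, List.Chain'], by simpa using hc⟩
    | cons y ys =>
      refine ⟨by simp, ?_, ?_⟩
      · rw [IsPathList, List.Chain', List.isChain_append]
        refine ⟨(List.isChain_cons.mp hp).2, List.isChain_singleton _, ?_⟩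
        intro a ha b hb
        simp only [List.head?_cons, Option.mem_def, Option.some.injEq] at hb
        subst hb
        exact hc x rfl a (by simpa using ha)
      · intro e he f hf
        simp only [List.cons_append, List.head?_cons, Option.mem_def, Option.some.injEq] at he
        rw [List.getLast?_concat] at hf
        simp only [Option.mem_def, Option.some.injEq] at hf
        rw [← he, ← hf]
        exact (List.isChain_cons.mp hp).1 y rfl

lemma cyc_rotate {W : List S.Arr} (h : S.IsCycList W) (n : ℕ) : S.IsCycList (W.rotate n) := by
  induction n with
  | zero => simpa using h
  | succ k ih =>
    have hr : W.rotate (k + 1) = (W.rotate k).rotate 1 := by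
      rw [List.rotate_rotate]
    rw [hr]
    exact cyc_rotate_one S ih

lemma rotate_to_head {W : List S.Arr} {e : S.Arr} (he : e ∈ W) :
    ∃ (j : ℕ) (rest : List S.Arr), W.rotate j = e :: rest := by
  obtain ⟨n, rfl⟩ := List.mem_iff_get.mp he
  refine ⟨n.1, W.drop (n.1 + 1) ++ W.take n.1, ?_⟩
  have hd : W.drop n.1 = W[n.1] :: W.drop (n.1 + 1) := List.drop_eq_getElem_cons n.2
  rw [List.rotate_eq_drop_append_take (le_of_lt n.2), hd, List.cons_append]
  simp [List.get_eq_getElem]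

lemma path_desc (hS : S.Valid) {W : List S.Arr} (hp : S.IsPathList W)
    (hd : ∀ e ∈ W, S.atgt e < S.asrc e) :
    ∀ e ∈ W.head?, ∀ f ∈ W.getLast?, S.atgt f < S.asrc e := by
  induction W with
  | nil => intro e he; simp at he
  | cons x xs ih =>
    intro e he f hf
    simp only [List.head?_cons, Option.mem_def, Option.some.injEq] at he
    cases xs with
    | nil =>
      simp only [List.getLast?_singleton, Option.mem_def, Option.some.injEq] at hf
      rw [← he, ← hf]
      exact hd x (by simp)
    | cons y ys =>
      rw [List.getLast?_cons_cons] at hf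
      have h1 := (List.isChain_cons.mp hp).1 y rfl
      have h2 := ih (List.isChain_cons_cons.mp hp).2 (fun g hg => hd g (List.mem_cons_of_mem _ hg))
        y rfl f hf
      have h3 := hd x (by simp)
      rw [← he]
      omega

lemma exists_incl (hS : S.Valid) {W : List S.Arr} (h : S.IsCycList W) :
    ∃ e ∈ W, S.InclArrow (S.asrc e) (S.atgt e) := by
  by_contra hno
  push_neg at hno
  have hd : ∀ e ∈ W, S.atgt e < S.asrc e := by
    intro e he
    rcases arrow_dichotomy S hS e with ⟨hh, _⟩ | ⟨hi, _⟩
    · exact (hor_facts S hS hh).2.2.1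
    · exact absurd hi (hno e he)
  obtain ⟨hne, hp, hc⟩ := h
  have hhead : W.head? = some (W.head hne) := List.head?_eq_head hne
  have hlast : W.getLast? = some (W.getLast hne) := List.getLast?_eq_getLast hne
  have d1 := path_desc S hS hp hd _ hhead _ hlast
  have d2 := hc _ hhead _ hlast
  omega

lemma hend_getLast {x : ℤ} {u : List S.Arr} (h : u ≠ []) :
    S.HEnd x u = S.atgt (u.getLast h) := by
  induction u generalizing x with
  | nil => exact absurd rfl h
  | cons e t ih =>
    cases t with
    | nil => simp
    | cons f t' => rw [hend_cons, List.getLast_cons (by simp), ih]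

lemma hchain_of_path (hS : S.Valid) {y : ℤ} {u : List S.Arr} (hp : S.IsPathList u)
    (hh : ∀ e ∈ u, S.node (S.asrc e) = S.node (S.atgt e))
    (hy : ∀ e ∈ u.head?, S.asrc e = y) : S.HChain y u := by
  induction u generalizing y with
  | nil => exact trivial
  | cons e t ih =>
    have h1 : S.asrc e = y := hy e rfl
    have h2 : S.HorArrow (S.asrc e) (S.atgt e) := by
      rcases arrow_dichotomy S hS e with ⟨hh', _⟩ | ⟨_, hne⟩
      · exact hh'
      · exact absurd (hh e (by simp)) hne
    refine (hchain_cons S).mpr ⟨h1, h2, ih (List.isChain_cons.mp hp).2 ?_ ?_⟩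
    · intro f hf; exact hh f (List.mem_cons_of_mem _ hf)
    · intro f hf
      exact ((List.isChain_cons.mp hp).1 f hf).symm

/-- Split a list at the first element failing the (Boolean) predicate. -/
lemma split_first_not {α : Type*} (p : α → Bool) (l : List α) :
    ∃ u d, l = u ++ d ∧ (∀ e ∈ u, p e = true) ∧
      (d = [] ∨ ∃ (h : d ≠ []), p (d.head h) = false) := by
  refine ⟨l.takeWhile p, l.dropWhile p, (List.takeWhile_append_dropWhile (p := p) (l := l)).symm,
    fun e he => List.mem_takeWhile_imp he, ?_⟩
  rcases eq_or_ne (l.dropWhile p) [] with h | h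
  · exact Or.inl h
  · exact Or.inr ⟨h, List.head_dropWhile_not p h⟩

lemma path_cons (hp : S.IsPathList (e :: l)) :
    S.IsPathList l ∧ ∀ f ∈ l.head?, S.atgt e = S.asrc f :=
  ⟨(List.isChain_cons.mp hp).2, (List.isChain_cons.mp hp).1⟩

lemma path_append_left {u d : List S.Arr} (hp : S.IsPathList (u ++ d)) : S.IsPathList u :=
  (List.isChain_append.mp hp).1

lemma path_append_right {u d : List S.Arr} (hp : S.IsPathList (u ++ d)) : S.IsPathList d :=
  (List.isChain_append.mp hp).2.1

lemma path_junction {u d : List S.Arr} (hp : S.IsPathList (u ++ d))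
    (hu : u ≠ []) (hd : d ≠ []) : S.atgt (u.getLast hu) = S.asrc (d.head hd) :=
  (List.isChain_append.mp hp).2.2 _ (List.getLast?_eq_getLast hu) _ (List.head?_eq_head hd)

/-- Closure of a cyclic list in convenient form. -/
lemma cyc_closure {W : List S.Arr} (h : S.IsCycList W) (hne : W ≠ []) :
    S.atgt (W.getLast hne) = S.asrc (W.head hne) :=
  h.2.2 _ (List.head?_eq_head hne) _ (List.getLast?_eq_getLast hne)

/-- The canonical segment datum: `σ = e :: ch` where `e` is an inclined arrow
`k → m` and `ch` is a nonempty horizontal chain from `m` down to `a < k`, all of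
whose sources are `> k`. -/
def Seg (T : BFZe) (k m a : ℤ) (σ : List T.Arr) : Prop :=
  ∃ e ch, σ = e :: ch ∧ T.asrc e = k ∧ T.atgt e = m ∧ T.InclArrow k m ∧ ch ≠ [] ∧
    T.HChain m ch ∧ T.HEnd m ch = a ∧ (∀ f ∈ ch, k < T.asrc f) ∧ a < k

/-- Main extraction: every cyclic list can be rotated so that it starts with a
canonical segment, where `k` is the largest source of an inclined arrow. -/
lemma extract (hS : S.Valid) {W : List S.Arr} (hW : S.IsCycList W) :
    ∃ (j : ℕ) (k m a : ℤ) (σ v : List S.Arr),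
      W.rotate j = σ ++ v ∧ S.Seg k m a σ ∧
      (∀ f ∈ W, S.InclArrow (S.asrc f) (S.atgt f) → S.asrc f ≤ k) := by
  classical
  obtain ⟨e0, he0W, he0I⟩ := exists_incl S hS hW
  -- pick the inclined arrow with maximal source
  have hmem_incl : ∀ e : S.Arr,
      (decide (S.node (S.asrc e) ≠ S.node (S.atgt e)) = true) ↔
        S.InclArrow (S.asrc e) (S.atgt e) := by
    intro e
    simp only [decide_eq_true_eq]
    rcases arrow_dichotomy S hS e with ⟨hh, heq⟩ | ⟨hi, hne⟩
    · constructor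
      · intro h; exact absurd heq h
      · intro h
        have h1 := (hor_facts S hS hh).2.2.1
        have h2 := h.2.2.2.1
        omega
    · exact ⟨fun _ => hi, fun _ => hne⟩
  have hfilne : W.filter (fun e => decide (S.node (S.asrc e) ≠ S.node (S.atgt e))) ≠ [] := by
    intro hcon
    have hm : e0 ∈ W.filter (fun e => decide (S.node (S.asrc e) ≠ S.node (S.atgt e))) :=
      List.mem_filter.mpr ⟨he0W, (hmem_incl e0).mpr he0I⟩
    rw [hcon] at hm
    simp at hm
  obtain ⟨estar, hestar, hmax0⟩ := exists_max_on_list S.asrc hfilne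
  have hestarW : estar ∈ W := (List.mem_filter.mp hestar).1
  have hestarI : S.InclArrow (S.asrc estar) (S.atgt estar) :=
    (hmem_incl estar).mp (List.mem_filter.mp hestar).2
  have hmax : ∀ f ∈ W, S.InclArrow (S.asrc f) (S.atgt f) → S.asrc f ≤ S.asrc estar := by
    intro f hf hfi
    exact hmax0 f (List.mem_filter.mpr ⟨hf, (hmem_incl f).mpr hfi⟩)
  have hkm : S.asrc estar < S.atgt estar := hestarI.2.2.2.1
  have hnodekm : S.node (S.asrc estar) ≠ S.node (S.atgt estar) := hestarI.2.2.1.ne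
  obtain ⟨j, rest, hrot⟩ := rotate_to_head S hestarW
  have hW1 : S.IsCycList (estar :: rest) := hrot ▸ cyc_rotate S hW j
  have hW1p : S.IsPathList (estar :: rest) := hW1.2.1
  have hmemW1 : ∀ f ∈ estar :: rest, f ∈ W := by
    intro f hf
    rw [← hrot] at hf
    exact (List.mem_rotate).mp hf
  -- split the maximal horizontal run after estar
  obtain ⟨u, d, hud, huq, hdq⟩ :=
    split_first_not (fun e => decide (S.node (S.asrc e) = S.node (S.atgt e))) rest
  subst hud
  have huhor : ∀ e ∈ u, S.node (S.asrc e) = S.node (S.atgt e) := by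
    intro e he
    simpa using huq e he
  have hupath : S.IsPathList u := path_append_left S (path_cons S hW1p).1
  have huchain : S.HChain (S.atgt estar) u := by
    refine hchain_of_path S hS hupath huhor ?_
    intro e he
    have hh : ∀ f ∈ (u ++ d).head?, S.atgt estar = S.asrc f := (path_cons S hW1p).2
    cases u with
    | nil => simp at he
    | cons x t =>
      simp only [List.head?_cons, Option.mem_def, Option.some.injEq] at he
      rw [← he]
      exact (hh x (by simp)).symm
  -- the run is followed by an inclined arrow
  have hdne : d ≠ [] := by
    intro hcon
    subst hcon
    cases u with
    | nil =>
      have hcl := hW1.2.2 estar (by simp) estar (by simp)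
      omega
    | cons x t =>
      have hne' : (x :: t : List S.Arr) ≠ [] := by simp
      have hgl : (estar :: (x :: t ++ ([] : List S.Arr))).getLast? =
          some ((x :: t).getLast hne') := by
        rw [List.append_nil, List.getLast?_cons_cons]
        exact List.getLast?_eq_getLast hne'
      have hcl := hW1.2.2 estar (by simp) _ hgl
      have h1 : S.atgt ((x :: t).getLast hne') = S.HEnd (S.atgt estar) (x :: t) :=
        (hend_getLast S hne').symm
      have h2 : S.node (S.HEnd (S.atgt estar) (x :: t)) = S.node (S.atgt estar) :=
        hend_node S hS huchain
      rw [← h1, hcl] at h2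
      exact hnodekm h2
  rcases hdq with hcon | ⟨hdne', hdq⟩
  · exact absurd hcon hdne
  have hf0 : ¬ S.node (S.asrc (d.head hdne)) = S.node (S.atgt (d.head hdne)) := by
    have := hdq
    simp only [decide_eq_false_iff_not] at this
    exact this
  have hf0incl : S.InclArrow (S.asrc (d.head hdne)) (S.atgt (d.head hdne)) := by
    rcases arrow_dichotomy S hS (d.head hdne) with ⟨hh, heq⟩ | ⟨hi, _⟩
    · exact absurd heq hf0
    · exact hi
  have hf0W : d.head hdne ∈ W := by
    refine hmemW1 _ (List.mem_cons_of_mem _ ?_)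
    exact List.mem_append_right _ (List.head_mem hdne)
  have hf0src : S.asrc (d.head hdne) = S.HEnd (S.atgt estar) u := by
    cases u with
    | nil =>
      have := (path_cons S hW1p).2 (d.head hdne) (by simp [List.head?_eq_head hdne])
      rw [← this]
      simp
    | cons x t =>
      have hju := path_junction S (path_cons S hW1p).1 (u := x :: t) (by simp) hdne
      rw [← hju, hend_getLast S (x := S.atgt estar) (u := x :: t) (by simp)]
  have hf0lt : S.asrc (d.head hdne) < S.asrc estar := by
    have hle := hmax _ hf0W hf0incl
    rcases lt_or_eq_of_le hle with h | h
    · exact h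
    · exfalso
      have hn : S.node (S.HEnd (S.atgt estar) u) = S.node (S.atgt estar) :=
        hend_node S hS huchain
      rw [← hf0src, h] at hn
      exact hnodekm hn
  -- split the chain at the first arrow whose target is ≤ k
  obtain ⟨u1, u2, hu12, hu1q, hu2q⟩ :=
    split_first_not (fun e => decide (S.asrc estar < S.atgt e)) u
  have hu2ne : u2 ≠ [] := by
    intro hcon
    rw [hcon, List.append_nil] at hu12
    have hallu : ∀ e ∈ u, S.asrc estar < S.atgt e := by
      intro e he
      have := hu1q e (hu12 ▸ he)
      simpa using this
    cases u with
    | nil =>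
      rw [hf0src] at hf0lt
      simp only [hend_nil] at hf0lt
      omega
    | cons x t =>
      have hne' : (x :: t : List S.Arr) ≠ [] := by simp
      have h1 : S.HEnd (S.atgt estar) (x :: t) = S.atgt ((x :: t).getLast hne') :=
        hend_getLast S hne'
      have h2 := hallu _ (List.getLast_mem hne')
      rw [hf0src, h1] at hf0lt
      omega
  rcases hu2q with hcon | ⟨hu2ne', hu2q⟩
  · exact absurd hcon hu2ne
  have hg0 : ¬ S.asrc estar < S.atgt (u2.head hu2ne) := by
    have := hu2q
    simp only [decide_eq_false_iff_not] at this
    exact this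
  have hg0mem : u2.head hu2ne ∈ u := by
    rw [hu12]
    exact List.mem_append_right _ (List.head_mem hu2ne)
  have hg0tgt_node : S.node (S.atgt (u2.head hu2ne)) = S.node (S.atgt estar) :=
    (hchain_mem_facts S hS huchain _ hg0mem).2.2.2.1
  have hg0tgt_lt : S.atgt (u2.head hu2ne) < S.asrc estar := by
    rcases lt_or_eq_of_le (not_lt.mp hg0) with h | h
    · exact h
    · exfalso
      rw [h] at hg0tgt_node
      exact hnodekm hg0tgt_node
  -- assemble
  have hchu : (u1 ++ [u2.head hu2ne]) ++ u2.tail = u := by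
    rw [List.append_assoc, List.singleton_append, List.cons_head_tail]
    exact hu12.symm
  have hchain_ch : S.HChain (S.atgt estar) (u1 ++ [u2.head hu2ne]) := by
    rw [← hchu] at huchain
    exact ((hchain_append S).mp huchain).1
  have hch_src : ∀ f ∈ u1 ++ [u2.head hu2ne], S.asrc estar < S.asrc f := by
    intro f hf
    rcases List.mem_append.mp hf with hf1 | hf1
    · have h1 := hu1q f hf1
      simp only [decide_eq_true_eq] at h1
      have h2 : f ∈ u := by rw [hu12]; exact List.mem_append_left _ hf1
      have := (hchain_mem_facts S hS huchain f h2).1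
      omega
    · simp only [List.mem_singleton] at hf1
      subst hf1
      have hic : S.HChain (S.HEnd (S.atgt estar) u1) [u2.head hu2ne] :=
        ((hchain_append S).mp hchain_ch).2
      have hsrc : S.asrc (u2.head hu2ne) = S.HEnd (S.atgt estar) u1 := hic.1
      cases hu1e : u1 with
      | nil => rw [hsrc, hu1e, hend_nil]; exact hkm
      | cons x t =>
        have hne' : (x :: t : List S.Arr) ≠ [] := by simp
        rw [hsrc, hu1e, hend_getLast S (x := S.atgt estar) (u := x :: t) hne']
        have hlmem : (x :: t).getLast hne' ∈ u1 := by
          rw [hu1e]; exact List.getLast_mem hne'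
        have h1 := hu1q _ hlmem
        simpa using h1
  refine ⟨j, S.asrc estar, S.atgt estar, S.atgt (u2.head hu2ne),
    estar :: (u1 ++ [u2.head hu2ne]), u2.tail ++ d, ?_, ?_, hmax⟩
  · rw [hrot, ← hchu]
    simp only [List.append_assoc, List.cons_append, List.nil_append]
  · exact ⟨estar, u1 ++ [u2.head hu2ne], rfl, rfl, rfl, hestarI, by simp,
      hchain_ch, by rw [hend_concat], hch_src, hg0tgt_lt⟩

lemma hchain_path {x : ℤ} {l : List S.Arr} (h : S.HChain x l) : S.IsPathList l := by
  induction l generalizing x with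
  | nil => exact List.isChain_nil
  | cons e t ih =>
    obtain ⟨h1, h2, h3⟩ := (hchain_cons S).mp h
    refine List.isChain_cons.mpr ⟨?_, ih h3⟩
    intro f hf
    cases t with
    | nil => simp at hf
    | cons g t' =>
      simp only [List.head?_cons, Option.mem_def, Option.some.injEq] at hf
      rw [← hf]
      exact h3.1.symm

lemma hchain_src_or {x : ℤ} {l : List S.Arr} (h : S.HChain x l) :
    ∀ e ∈ l, S.asrc e = x ∨ ∃ f ∈ l, S.atgt f = S.asrc e := by
  induction l generalizing x with
  | nil => intro e he; simp at he
  | cons g t ih =>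
    intro e he
    obtain ⟨h1, h2, h3⟩ := (hchain_cons S).mp h
    rcases List.mem_cons.mp he with rfl | he'
    · exact Or.inl h1
    · rcases ih h3 e he' with h4 | ⟨f, hf, h4⟩
      · exact Or.inr ⟨g, by simp, h4.symm ▸ rfl⟩
      · exact Or.inr ⟨f, List.mem_cons_of_mem _ hf, h4⟩

/-- The closing inclined arrow `a → k` exists. -/
lemma seg_inclA (hS : S.Valid) {k m a : ℤ} {σ : List S.Arr} (hseg : S.Seg k m a σ) :
    S.InclArrow a k := by
  obtain ⟨e, ch, hσ, hsrc, htgt, hincl, hchne, hch, hend, hgt, hak⟩ := hseg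
  have hfac := incl_facts S hS hincl
  have hg : ch.getLast hchne ∈ ch := List.getLast_mem hchne
  have hgf := hchain_mem_facts S hS hch _ hg
  have hga : S.atgt (ch.getLast hchne) = a := by
    rw [← hend_getLast S hchne, hend]
  have hgh := hgf.2.2.2.2
  have hsucc : S.asrc (ch.getLast hchne) = S.succ a := by
    rw [← hga]; exact hgh.2.1
  have hIdxa : S.Idx a := by rw [← hga]; exact hgh.1
  have hnodea : S.node a = S.node m := by rw [← hend]; exact hend_node S hS hch
  have hgk := hgt _ hg
  have hgm := hgf.2.1
  refine ⟨hIdxa, hfac.1, ?_, hak, ?_, ?_⟩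
  · rw [hnodea]
    exact hfac.2.2.2.2.2.2.symm
  · rw [← hsucc]; exact hgk
  · rw [← hsucc]
    have := hfac.2.2.2.2.1
    omega

lemma seg_src_le (hS : S.Valid) {k m a : ℤ} {σ : List S.Arr} (hseg : S.Seg k m a σ) :
    ∀ f ∈ σ, S.asrc f ≤ m := by
  obtain ⟨e, ch, hσ, hsrc, htgt, hincl, hchne, hch, hend, hgt, hak⟩ := hseg
  subst hσ
  intro f hf
  rcases List.mem_cons.mp hf with rfl | hf'
  · rw [hsrc]; exact le_of_lt hincl.2.2.2.1
  · exact (hchain_mem_facts S hS hch f hf').2.1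

/-- Characterisation of the sources of `A :: σ`. -/
lemma seg_src_char (hS : S.Valid) {k m a : ℤ} {σ : List S.Arr} (hseg : S.Seg k m a σ) :
    ∀ x ∈ σ.map S.asrc, x = k ∨
      (S.node x = S.node m ∧ k < x ∧ x ≤ m ∧
        (x = m ∨ ∃ f ∈ σ, S.atgt f = x ∧ S.asrc f = S.succ x)) := by
  obtain ⟨e, ch, hσ, hsrc, htgt, hincl, hchne, hch, hend, hgt, hak⟩ := hseg
  subst hσ
  intro x hx
  simp only [List.map_cons, List.mem_cons] at hx
  rcases hx with rfl | hx'
  · exact Or.inl hsrc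
  · obtain ⟨f, hf, rfl⟩ := List.mem_map.mp hx'
    have hfac := hchain_mem_facts S hS hch f hf
    refine Or.inr ⟨hfac.2.2.1, hgt f hf, hfac.2.1, ?_⟩
    rcases hchain_src_or S hch f hf with h | ⟨g, hg, h⟩
    · exact Or.inl h
    · refine Or.inr ⟨g, List.mem_cons_of_mem _ hg, h, ?_⟩
      have hgh := (hchain_mem_facts S hS hch g hg).2.2.2.2
      rw [← h]
      exact (hor_facts S hS hgh).2.2.2.2.1

/-- The last arrow of the segment: a horizontal arrow into `a`. -/
lemma seg_last (hS : S.Valid) {k m a : ℤ} {σ : List S.Arr} (hseg : S.Seg k m a σ) :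
    ∃ g ∈ σ, S.atgt g = a ∧ S.asrc g = S.succ a ∧ k < S.asrc g ∧ S.asrc g ≤ m := by
  obtain ⟨e, ch, hσ, hsrc, htgt, hincl, hchne, hch, hend, hgt, hak⟩ := hseg
  subst hσ
  have hg : ch.getLast hchne ∈ ch := List.getLast_mem hchne
  have hgf := hchain_mem_facts S hS hch _ hg
  have hga : S.atgt (ch.getLast hchne) = a := by
    rw [← hend_getLast S hchne, hend]
  refine ⟨ch.getLast hchne, List.mem_cons_of_mem _ hg, hga, ?_, hgt _ hg, hgf.2.1⟩
  rw [← hga]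
  exact hgf.2.2.2.2.2.1

lemma seg_cyc (hS : S.Valid) {k m a : ℤ} {σ : List S.Arr} (hseg : S.Seg k m a σ)
    {A : S.Arr} (hA : A.1 = (a, k)) : S.IsCycList (A :: σ) := by
  have hAs : S.asrc A = a := by rw [asrc, hA]
  have hAt : S.atgt A = k := by rw [atgt, hA]
  obtain ⟨e, ch, hσ, hsrc, htgt, hincl, hchne, hch, hend, hgt, hak⟩ := hseg
  subst hσ
  refine ⟨by simp, ?_, ?_⟩
  · refine List.isChain_cons.mpr ⟨?_, ?_⟩
    · intro f hf
      simp only [List.head?_cons, Option.mem_def, Option.some.injEq] at hf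
      rw [← hf, hAt, hsrc]
    · refine List.isChain_cons.mpr ⟨?_, hchain_path S hch⟩
      intro f hf
      cases ch with
      | nil => simp at hf
      | cons c0 t =>
        simp only [List.head?_cons, Option.mem_def, Option.some.injEq] at hf
        rw [← hf, htgt, hch.1]
  · intro f hf g hg
    simp only [List.head?_cons, Option.mem_def, Option.some.injEq] at hf
    have hgl : (A :: e :: ch).getLast? = some (ch.getLast hchne) := by
      rw [List.getLast?_cons_cons]
      cases ch with
      | nil => exact absurd rfl hchne
      | cons c0 t =>
        rw [List.getLast?_cons_cons]
        exact List.getLast?_eq_getLast (by simp)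
    rw [hgl] at hg
    simp only [Option.mem_def, Option.some.injEq] at hg
    rw [← hf, ← hg, hAs]
    rw [← hend_getLast S hchne, hend]

lemma seg_nodup (hS : S.Valid) {k m a : ℤ} {σ : List S.Arr} (hseg : S.Seg k m a σ)
    {A : S.Arr} (hA : A.1 = (a, k)) : ((A :: σ).map S.asrc).Nodup := by
  have hAs : S.asrc A = a := by rw [asrc, hA]
  obtain ⟨e, ch, hσ, hsrc, htgt, hincl, hchne, hch, hend, hgt, hak⟩ := hseg
  subst hσ
  have hkm := hincl.2.2.2.1
  simp only [List.map_cons, List.nodup_cons, hAs, hsrc]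
  refine ⟨?_, ?_, ?_⟩
  · simp only [List.mem_cons]
    push_neg
    refine ⟨by omega, ?_⟩
    intro hmem
    obtain ⟨f, hf, hfs⟩ := List.mem_map.mp hmem
    have := hgt f hf
    omega
  · intro hmem
    obtain ⟨f, hf, hfs⟩ := List.mem_map.mp hmem
    have := hgt f hf
    omega
  · have hp := hchain_src_pairwise S hS hch
    exact hp.imp (fun h => ne_of_gt h)

lemma seg_chord (hS : S.Valid) {k m a : ℤ} {σ : List S.Arr} (hseg : S.Seg k m a σ)
    {A : S.Arr} (hA : A.1 = (a, k)) :
    ∀ x y : ℤ, x ∈ (A :: σ).map S.asrc → y ∈ (A :: σ).map S.asrc → S.Arrow x y →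
      ∃ e' ∈ A :: σ, S.asrc e' = x ∧ S.atgt e' = y := by
  have hAs : S.asrc A = a := by rw [asrc, hA]
  have hAt : S.atgt A = k := by rw [atgt, hA]
  have hinclA := seg_inclA S hS hseg
  have hchar := seg_src_char S hS hseg
  have hlast := seg_last S hS hseg
  have hsle := seg_src_le S hS hseg
  obtain ⟨e, ch, hσe, hsrc, htgt, hincl, hchne, hch, hend, hgt, hak⟩ := hseg
  have hfac := incl_facts S hS hincl
  have hfacA := incl_facts S hS hinclA
  have hnodea : S.node a = S.node m := by
    rw [← hend]
    exact hend_node S hS hch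
  have hsuccm := hfac.2.2.2.2.2.1
  have hmsk := hfac.2.2.2.2.1
  have hkm := hfac.2.2.1
  have hsm : S.Idx m := hfac.2.1
  have hsuccm_gt : m < S.succ m := valid_succ_gt S hS hsm
  -- source membership characterisation including A
  have hmem : ∀ x ∈ (A :: σ).map S.asrc, x = a ∨ x = k ∨
      (S.node x = S.node m ∧ k < x ∧ x ≤ m ∧
        (x = m ∨ ∃ f ∈ σ, S.atgt f = x ∧ S.asrc f = S.succ x)) := by
    intro x hx
    simp only [List.map_cons, List.mem_cons] at hx
    rcases hx with rfl | hx'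
    · exact Or.inl hAs
    · rcases hchar x (by rw [hσe] at hx' ⊢; simpa using hx') with h | h
      · exact Or.inr (Or.inl h)
      · exact Or.inr (Or.inr h)
  have hbound : ∀ x ∈ (A :: σ).map S.asrc, x ≤ m := by
    intro x hx
    rcases hmem x hx with rfl | rfl | ⟨_, _, h, _⟩
    · omega
    · omega
    · exact h
  intro x y hx hy harr
  rcases harr with hhor | hi
  · -- horizontal chord
    have hh := hor_facts S hS hhor
    have hxy : y < x := hh.2.2.1
    have hxs : x = S.succ y := hh.2.2.2.2.1
    have hxm := hbound x hx
    rcases hmem y hy with rfl | rfl | ⟨hn, hky, hym, hyor⟩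
    · -- y = a
      obtain ⟨g, hg, hg1, hg2, _, _⟩ := hlast
      exact ⟨g, List.mem_cons_of_mem _ hg, by omega, hg1⟩
    · -- y = k : impossible
      exfalso
      omega
    · rcases hyor with rfl | ⟨f, hf, hf1, hf2⟩
      · -- y = m : impossible
        exfalso
        have := valid_succ_gt S hS hsm
        omega
      · exact ⟨f, List.mem_cons_of_mem _ hf, by omega, hf1⟩
  · -- inclined chord
    have hif := incl_facts S hS hi
    have hxlty := hif.2.2.1
    have hnodexy := hif.2.2.2.1
    have hksucca := hfacA.2.2.2.2.1
    have hsuccak := hfacA.2.2.2.2.2.1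
    rcases hmem x hx with rfl | rfl | ⟨hnx, hkx, hxm, hxor⟩
    · -- x = a
      rcases hmem y hy with rfl | rfl | ⟨hny, hky, hym, _⟩
      · exfalso; omega
      · exact ⟨A, by simp, hAs, hAt⟩
      · exfalso
        exact hnodexy (by rw [hnodea, hny])
    · -- x = k
      rcases hmem y hy with rfl | rfl | ⟨hny, hky, hym, hyor⟩
      · exfalso; omega
      · exfalso; omega
      · rcases hyor with rfl | ⟨f, hf, hf1, hf2⟩
        · exact ⟨e, by rw [hσe]; simp, hsrc, htgt⟩
        · exfalso
          have h1 : S.asrc f ≤ m := hsle f hf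
          have h2 := hif.2.2.2.2.2.1
          rw [hf2] at h1
          omega
    · -- x on the chain string
      rcases hmem y hy with rfl | rfl | ⟨hny, hky, hym, _⟩
      · exfalso; omega
      · exfalso; omega
      · exfalso
        exact hnodexy (by rw [hnx, hny])

lemma seg_face (hS : S.Valid) {k m a : ℤ} {σ : List S.Arr} (hseg : S.Seg k m a σ)
    {A : S.Arr} (hA : A.1 = (a, k)) : S.IsFaceList (A :: σ) :=
  ⟨seg_cyc S hS hseg hA, seg_nodup S hS hseg hA, seg_chord S hS hseg hA⟩

/-- Every face list is, up to rotation, of the canonical form `σ ++ [A]` where `σ`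
is a canonical segment and `A` the closing inclined arrow. -/
lemma face_struct (hS : S.Valid) {L : List S.Arr} (hL : S.IsFaceList L) :
    ∃ (j : ℕ) (k m a : ℤ) (σ : List S.Arr) (A : S.Arr),
      L.rotate j = σ ++ [A] ∧ S.Seg k m a σ ∧ A.1 = (a, k) ∧
      (∀ f ∈ L, S.InclArrow (S.asrc f) (S.atgt f) → S.asrc f ≤ k) := by
  obtain ⟨hcyc, hnd, hchord⟩ := hL
  obtain ⟨j, k, m, a, σ, v, hrot, hseg, hmax⟩ := extract S hS hcyc
  have hrotcyc : S.IsCycList (σ ++ v) := hrot ▸ cyc_rotate S hcyc j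
  have hndr : ((σ ++ v).map S.asrc).Nodup := by
    rw [← hrot, List.map_rotate]
    exact (List.nodup_rotate).mpr hnd
  have hinclA := seg_inclA S hS hseg
  have hsegfull := hseg
  obtain ⟨e, ch, hσ, hsrc, htgt, hincl, hchne, hch, hend, hgt, hak⟩ := hseg
  subst hσ
  have hσne : (e :: ch : List S.Arr) ≠ [] := by simp
  have hlasttgt : S.atgt ((e :: ch).getLast hσne) = a := by
    rw [List.getLast_cons hchne, ← hend_getLast S hchne, hend]
  have hkc := hincl.2.2.2.1
  -- v is nonempty
  have hvne : v ≠ [] := by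
    intro hv
    subst hv
    rw [List.append_nil] at hrotcyc
    have hcl := cyc_closure S hrotcyc hσne
    rw [hlasttgt] at hcl
    simp only [List.head_cons] at hcl
    rw [hsrc] at hcl
    omega
  obtain ⟨f0, v', hv⟩ := List.exists_cons_of_ne_nil hvne
  subst hv
  -- the first arrow of v starts at `a`
  have hf0src : S.asrc f0 = a := by
    have hp : S.IsPathList ((e :: ch) ++ f0 :: v') := hrotcyc.2.1
    have hj := path_junction S hp hσne (by simp)
    rw [hlasttgt] at hj
    simp only [List.head_cons] at hj
    exact hj.symm
  -- memberships
  have hmem_of : ∀ f ∈ (e :: ch) ++ f0 :: v', f ∈ L := by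
    intro f hf
    rw [← hrot] at hf
    exact List.mem_rotate.mp hf
  have heL : e ∈ L := hmem_of e (by simp)
  have hf0L : f0 ∈ L := hmem_of f0 (by simp)
  have haMem : a ∈ L.map S.asrc := by
    rw [← hf0src]
    exact List.mem_map_of_mem hf0L
  have hkMem : k ∈ L.map S.asrc := by
    rw [← hsrc]
    exact List.mem_map_of_mem heL
  obtain ⟨E, hEL, hEs, hEt⟩ := hchord a k haMem hkMem (Or.inr hinclA)
  have hf0E : f0 = E := nodup_src_unique S hnd hf0L hEL (by rw [hf0src, hEs])
  have hf0tgt : S.atgt f0 = k := by rw [hf0E, hEt]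
  -- v has exactly one element
  have hv'nil : v' = [] := by
    rcases v' with _ | ⟨g, v''⟩
    · rfl
    · exfalso
      have hp : S.IsPathList ((e :: ch) ++ f0 :: g :: v'') := hrotcyc.2.1
      have hpr : S.IsPathList (f0 :: g :: v'') := path_append_right S hp
      have hlink : S.atgt f0 = S.asrc g := (List.isChain_cons_cons.mp hpr).1
      have hgsrc : S.asrc g = S.asrc e := by rw [← hlink, hf0tgt, hsrc]
      have hcontra := hndr
      simp only [List.cons_append, List.map_cons, List.nodup_cons] at hcontra
      refine hcontra.1 ?_
      rw [← hgsrc]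
      have : g ∈ ch ++ f0 :: g :: v'' := by simp
      exact List.mem_map_of_mem this
  subst hv'nil
  refine ⟨j, k, m, a, e :: ch, f0, hrot, hsegfull, ?_, hmax⟩
  have h1 : f0.1.1 = a := hf0src
  have h2 : f0.1.2 = k := hf0tgt
  exact Prod.ext h1 h2

/-- If a face list contains the closing arrow `A` of a canonical segment `σ`, it is
either a rotation of the canonical face `A :: σ`, or all its sources are `≤ k`. -/
lemma face_contains (hS : S.Valid) {L : List S.Arr} (hL : S.IsFaceList L)
    {k m a : ℤ} {σ : List S.Arr} (hseg : S.Seg k m a σ)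
    {A : S.Arr} (hA : A.1 = (a, k)) (hmemA : A ∈ L) :
    (∃ i : ℕ, L.rotate i = A :: σ) ∨ (∀ f ∈ L, S.asrc f ≤ k) := by
  obtain ⟨j, k', m', a', σ', A', hrot, hseg', hA', hmax'⟩ := face_struct S hS hL
  have hmemA' : A ∈ σ' ++ [A'] := by rw [← hrot]; exact List.mem_rotate.mpr hmemA
  have hAs : S.asrc A = a := by rw [asrc, hA]
  have hAt : S.atgt A = k := by rw [atgt, hA]
  have hinclA : S.InclArrow a k := seg_inclA S hS hseg
  have hak2 : a < k := hinclA.2.2.2.1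
  have hseg'full := hseg'
  obtain ⟨e', ch', hσ', hsrc', htgt', hincl', hchne', hch', hend', hgt', hak'⟩ := hseg'
  subst hσ'
  rcases List.mem_append.mp hmemA' with hin | hin
  · rcases List.mem_cons.mp hin with heq | hin'
    · -- A = e' : all sources of L are ≤ k
      right
      have hk' : a = k' := by rw [← hAs, heq]; exact hsrc'
      have hm' : k = m' := by rw [← hAt, heq]; exact htgt'
      intro f hf
      have hf' : f ∈ (e' :: ch') ++ [A'] := by rw [← hrot]; exact List.mem_rotate.mpr hf
      rcases List.mem_append.mp hf' with h | h
      · have := seg_src_le S hS hseg'full f h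
        omega
      · simp only [List.mem_singleton] at h
        subst h
        have hfa : S.asrc f = a' := by rw [asrc, hA']
        omega
    · -- A on the chain: contradiction (A is inclined)
      exfalso
      have hhor := (hchain_mem_facts S hS hch' A hin').2.2.2.2
      have hlt := (hor_facts S hS hhor).2.2.1
      rw [hAs, hAt] at hlt
      omega
  · -- A = A' : L is a rotation of A :: σ
    simp only [List.mem_singleton] at hin
    have hpair : (a', k') = (a, k) := by rw [← hA', ← hin, hA]
    have ha2 : a = a' := ((Prod.mk.injEq _ _ _ _).mp hpair |>.1).symm
    have hk2 : k = k' := ((Prod.mk.injEq _ _ _ _).mp hpair |>.2).symm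
    subst ha2 hk2
    obtain ⟨e, ch, hσ2, hsrc, htgt, hincl, hchne, hch, hend, hgt, hak⟩ := hseg
    subst hσ2
    -- the tops agree
    have hna : S.node a = S.node m := by rw [← hend]; exact hend_node S hS hch
    have hna' : S.node a = S.node m' := by rw [← hend']; exact hend_node S hS hch'
    have hnm : S.node m' = S.node m := by rw [← hna, hna']
    have hm : m' = m := by
      have hfm := incl_facts S hS hincl
      have hfm' := incl_facts S hS hincl'
      by_contra hne
      rcases lt_or_gt_of_ne hne with hlt | hlt
      · have := valid_succ_min S hS hfm'.2.1 hfm.2.1 hlt hnm.symm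
        have b1 := hfm.2.2.2.2.1
        have b2 := hfm.2.2.2.2.2.1
        have b3 := hfm'.2.2.2.2.1
        have b4 := hfm'.2.2.2.2.2.1
        omega
      · have := valid_succ_min S hS hfm.2.1 hfm'.2.1 hlt hnm
        have b1 := hfm.2.2.2.2.1
        have b2 := hfm.2.2.2.2.2.1
        have b3 := hfm'.2.2.2.2.1
        have b4 := hfm'.2.2.2.2.2.1
        omega
    subst hm
    have hee : e' = e := arr_ext S (by rw [hsrc, hsrc']) (by rw [htgt, htgt'])
    subst hee
    have hcc : ch' = ch := hchain_unique S hS hch' hend' hch hend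
    subst hcc
    left
    refine ⟨j + (e' :: ch').length, ?_⟩
    rw [← List.rotate_rotate, hrot, ← hin]
    exact List.rotate_append_length_eq _ _

lemma pathProd_append (X Y : List S.Arr) :
    S.pathProd (X ++ Y) = S.pathProd X * S.pathProd Y := by
  rw [pathProd, pathProd, pathProd, List.map_append, List.prod_append]

lemma sub_rotate_mem_cycSpan {W : List S.Arr} (hW : S.IsCycList W) (n : ℕ) :
    S.pathProd W - S.pathProd (W.rotate n) ∈ S.cycSpan := by
  induction n with
  | zero => rw [List.rotate_zero]; simp
  | succ p ih =>
    have hgen : S.pathProd (W.rotate p) - S.pathProd ((W.rotate p).rotate 1) ∈ S.cycSpan :=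
      Submodule.subset_span ⟨W.rotate p, cyc_rotate S hW p, rfl⟩
    rw [List.rotate_rotate] at hgen
    have hsum := Submodule.add_mem _ ih hgen
    rw [sub_add_sub_cancel] at hsum
    exact hsum

lemma mem_split_unique {L : List S.Arr} (hnd : (L.map S.asrc).Nodup)
    {A : S.Arr} (hA : A ∈ L) : ∃ X Y, L = X ++ A :: Y ∧ A ∉ X ∧ A ∉ Y := by
  obtain ⟨X, Y, hXY⟩ := List.append_of_mem hA
  subst hXY
  have h2 : (X.map S.asrc ++ S.asrc A :: Y.map S.asrc).Nodup := by
    simpa using hnd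
  refine ⟨X, Y, rfl, ?_, ?_⟩
  · intro hmem
    exact (List.disjoint_of_nodup_append h2) (List.mem_map_of_mem hmem) (by simp)
  · intro hmem
    have h3 := List.Nodup.of_append_right h2
    rw [List.nodup_cons] at h3
    exact h3.1 (List.mem_map_of_mem hmem)

lemma cycDeriv_eq_zero {A : S.Arr} {L : List S.Arr} (h : A ∉ L) :
    S.cycDeriv A L = 0 := by
  rw [cycDeriv]
  refine Finset.sum_eq_zero ?_
  intro j _
  rw [if_neg]
  intro hcon
  exact h (List.mem_of_getElem? hcon)

lemma cycDeriv_eq {A : S.Arr} {X Y : List S.Arr} (hX : A ∉ X) (hY : A ∉ Y) :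
    S.cycDeriv A (X ++ A :: Y) = S.pathProd (Y ++ X) := by
  classical
  rw [cycDeriv]
  have hlen : (X ++ A :: Y).length = X.length + Y.length + 1 := by simp; omega
  have hmem : X.length ∈ Finset.range (X ++ A :: Y).length := by
    rw [Finset.mem_range, hlen]; omega
  rw [Finset.sum_eq_single_of_mem X.length hmem ?_]
  · rw [if_pos ?_]
    · congr 1
      have hdrop : (X ++ A :: Y).drop (X.length + 1) = Y := by
        have hXA : (X ++ A :: Y) = (X ++ [A]) ++ Y := by simp
        rw [hXA, List.drop_left' (by simp)]
      have htake : (X ++ A :: Y).take X.length = X := List.take_left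
      rw [hdrop, htake]
    · rw [List.getElem?_append_right (le_refl _)]
      simp
  · intro j hj hne
    rw [if_neg]
    intro hcon
    rcases lt_or_ge j X.length with h | h
    · rw [List.getElem?_append_left h] at hcon
      exact hX (List.mem_of_getElem? hcon)
    · have h2 : X.length < j := lt_of_le_of_ne h (Ne.symm hne)
      rw [List.getElem?_append_right h] at hcon
      have h3 : j - X.length = (j - X.length - 1) + 1 := by omega
      rw [h3] at hcon
      simp only [List.getElem?_cons_succ] at hcon
      exact hY (List.mem_of_getElem? hcon)

/-- Splitting a rotation of `A :: σ` (with `A` not in `σ`) around `A`. -/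
lemma rotate_split {σ : List S.Arr} {A : S.Arr} (hA : A ∉ σ) (i : ℕ) :
    ∃ X Y, (A :: σ).rotate i = X ++ A :: Y ∧ Y ++ X = σ ∧ A ∉ X ∧ A ∉ Y := by
  set F := A :: σ with hF
  have hlen : F.length = σ.length + 1 := by simp [hF]
  have h1 : F.rotate i = F.rotate (i % F.length) := (List.rotate_mod _ _).symm
  have h2 : i % F.length < F.length := Nat.mod_lt _ (by rw [hlen]; omega)
  rw [h1, List.rotate_eq_drop_append_take (le_of_lt h2)]
  rcases Nat.eq_zero_or_pos (i % F.length) with h3 | h3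
  · rw [h3]
    exact ⟨[], σ, by simp [hF], by simp, by simp, hA⟩
  · obtain ⟨p, hp⟩ := Nat.exists_eq_succ_of_ne_zero (Nat.pos_iff_ne_zero.mp h3)
    rw [hp]
    refine ⟨σ.drop p, σ.take p, by simp [hF], List.take_append_drop _ _, ?_, ?_⟩
    · intro hc; exact hA ((List.drop_sublist _ _).mem hc)
    · intro hc; exact hA ((List.take_sublist _ _).mem hc)

/-- The closing arrow `A` is not an arrow of the segment `σ`. -/
lemma seg_A_not_mem (hS : S.Valid) {k m a : ℤ} {σ : List S.Arr} (hseg : S.Seg k m a σ)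
    {A : S.Arr} (hA : A.1 = (a, k)) : A ∉ σ := by
  intro hmem
  have hAs : S.asrc A = a := by rw [asrc, hA]
  have hsm : S.asrc A ∈ σ.map S.asrc := List.mem_map_of_mem hmem
  have hak : a < k := (seg_inclA S hS hseg).2.2.2.1
  rcases seg_src_char S hS hseg _ hsm with h | ⟨_, h, _⟩ <;> omega

lemma seg_head_src (hS : S.Valid) {k m a : ℤ} {σ : List S.Arr} (hseg : S.Seg k m a σ) :
    ∀ f ∈ σ.head?, S.asrc f = k := by
  obtain ⟨e, ch, hσ, hsrc, _, _, _, _, _, _, _⟩ := hseg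
  subst hσ
  intro f hf
  simp only [List.head?_cons, Option.mem_def, Option.some.injEq] at hf
  rw [← hf]
  exact hsrc

lemma seg_getLast_tgt (hS : S.Valid) {k m a : ℤ} {σ : List S.Arr} (hseg : S.Seg k m a σ) :
    ∀ f ∈ σ.getLast?, S.atgt f = a := by
  obtain ⟨e, ch, hσ, hsrc, htgt, hincl, hchne, hch, hend, hgt, hak⟩ := hseg
  subst hσ
  intro f hf
  have hgl : (e :: ch).getLast? = some (ch.getLast hchne) := by
    cases ch with
    | nil => exact absurd rfl hchne
    | cons c0 t =>
      rw [List.getLast?_cons_cons]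
      exact List.getLast?_eq_getLast (by simp)
  rw [hgl] at hf
  simp only [Option.mem_def, Option.some.injEq] at hf
  rw [← hf, ← hend_getLast S hchne, hend]

/-- Complement of an arrow in a cyclic list is a path with matching endpoints. -/
lemma comp_path {X Y : List S.Arr} {A : S.Arr} (hL : S.IsCycList (X ++ A :: Y)) :
    S.IsPathList (Y ++ X) ∧
    (∀ e ∈ (Y ++ X).head?, S.asrc e = S.atgt A) ∧
    (∀ e ∈ (Y ++ X).getLast?, S.atgt e = S.asrc A) := by
  obtain ⟨hne, hp, hc⟩ := hL
  have hXp : S.IsPathList X := path_append_left S hp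
  have hAYp : S.IsPathList (A :: Y) := path_append_right S hp
  have hYp : S.IsPathList Y := (path_cons S hAYp).1
  have hAY : ∀ e ∈ Y.head?, S.asrc e = S.atgt A := by
    intro e he
    exact ((path_cons S hAYp).2 e he).symm
  have hXA : ∀ (hX : X ≠ []), S.atgt (X.getLast hX) = S.asrc A := by
    intro hX
    exact path_junction S hp hX (by simp)
  -- closure data
  have hclos : ∀ (hYne : Y ≠ []) (hXne : X ≠ []),
      S.atgt (Y.getLast hYne) = S.asrc (X.head hXne) := by
    intro hYne hXne
    have h1 : (X ++ A :: Y).getLast (by simp) = Y.getLast hYne := by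
      rw [List.getLast_append_of_ne_nil _ (by simp)]
      exact List.getLast_cons hYne
    have h2 : (X ++ A :: Y).head (by simp) = X.head hXne := by
      cases X with
      | nil => exact absurd rfl hXne
      | cons x t => simp
    have := cyc_closure S ⟨hne, hp, hc⟩ (by simp)
    rw [h1, h2] at this
    exact this
  refine ⟨?_, ?_, ?_⟩
  · rw [IsPathList, List.Chain', List.isChain_append]
    refine ⟨hYp, hXp, ?_⟩
    intro x hx y hy
    have hYne : Y ≠ [] := by intro hcon; rw [hcon] at hx; simp at hx
    have hXne : X ≠ [] := by intro hcon; rw [hcon] at hy; simp at hy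
    rw [List.getLast?_eq_getLast hYne] at hx
    rw [List.head?_eq_head hXne] at hy
    simp only [Option.mem_def, Option.some.injEq] at hx hy
    rw [← hx, ← hy]
    exact hclos hYne hXne
  · intro e he
    cases Y with
    | cons y t =>
      simp only [List.cons_append, List.head?_cons, Option.mem_def, Option.some.injEq] at he
      rw [← he]
      exact hAY y (by simp)
    | nil =>
      simp only [List.nil_append] at he
      have hXne : X ≠ [] := by intro hcon; rw [hcon] at he; simp at he
      rw [List.head?_eq_head hXne] at he
      simp only [Option.mem_def, Option.some.injEq] at he
      -- closure: last of L is A, head of L is head of X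
      have h1 : (X ++ A :: ([] : List S.Arr)).getLast (by simp) = A := by
        rw [List.getLast_append_of_ne_nil _ (by simp)]
        simp
      have h2 : (X ++ A :: ([] : List S.Arr)).head (by simp) = X.head hXne := by
        cases X with
        | nil => exact absurd rfl hXne
        | cons x t => simp
      have := cyc_closure S ⟨hne, hp, hc⟩ (by simp)
      rw [h1, h2] at this
      rw [← he, ← this]
  · intro e he
    rcases eq_or_ne X [] with hXe | hXne
    case inr =>
      have h1 : (Y ++ X).getLast? = some (X.getLast hXne) := by
        rw [List.getLast?_append_of_ne_nil _ hXne]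
        exact List.getLast?_eq_getLast hXne
      rw [h1] at he
      simp only [Option.mem_def, Option.some.injEq] at he
      rw [← he]
      exact hXA hXne
    case inl =>
      subst hXe
      simp only [List.append_nil] at he
      have hYne : Y ≠ [] := by intro hcon; rw [hcon] at he; simp at he
      rw [List.getLast?_eq_getLast hYne] at he
      simp only [Option.mem_def, Option.some.injEq] at he
      have h1 : (([] : List S.Arr) ++ A :: Y).getLast (by simp) = Y.getLast hYne := by
        simp only [List.nil_append]
        exact List.getLast_cons hYne
      have h2 : (([] : List S.Arr) ++ A :: Y).head (by simp) = A := by simp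
      have := cyc_closure S ⟨hne, hp, hc⟩ (by simp)
      rw [h1, h2] at this
      rw [← he, this]

/-- Gluing a complement path with the rest of the walk gives a cyclic list. -/
lemma cyc_glue {σ v c : List S.Arr} (hW : S.IsCycList (σ ++ v)) (hσne : σ ≠ [])
    (hcne : c ≠ []) (hcp : S.IsPathList c)
    (hhead : ∀ e ∈ c.head?, ∀ f ∈ σ.head?, S.asrc e = S.asrc f)
    (hlast : ∀ e ∈ c.getLast?, ∀ f ∈ σ.getLast?, S.atgt e = S.atgt f) :
    S.IsCycList (c ++ v) := by
  obtain ⟨hne, hp, hc⟩ := hW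
  have hσp : S.IsPathList σ := path_append_left S hp
  have hvp : S.IsPathList v := path_append_right S hp
  have hheads : S.asrc (c.head hcne) = S.asrc (σ.head hσne) := by
    exact hhead _ (List.head?_eq_head hcne) _ (List.head?_eq_head hσne)
  have hlasts : S.atgt (c.getLast hcne) = S.atgt (σ.getLast hσne) := by
    exact hlast _ (List.getLast?_eq_getLast hcne) _ (List.getLast?_eq_getLast hσne)
  refine ⟨by simp [hcne], ?_, ?_⟩
  · rw [IsPathList, List.Chain', List.isChain_append]
    refine ⟨hcp, hvp, ?_⟩
    intro x hx y hy
    have hvne : v ≠ [] := by intro hcon; rw [hcon] at hy; simp at hy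
    rw [List.getLast?_eq_getLast hcne] at hx
    rw [List.head?_eq_head hvne] at hy
    simp only [Option.mem_def, Option.some.injEq] at hx hy
    have hj := path_junction S hp hσne hvne
    rw [← hx, ← hy, hlasts]
    exact hj
  · intro e he f hf
    have hheadc : (c ++ v).head? = some (c.head hcne) := by
      rw [List.head?_append_of_ne_nil _ hcne]
      exact List.head?_eq_head hcne
    rw [hheadc] at he
    simp only [Option.mem_def, Option.some.injEq] at he
    rcases eq_or_ne v [] with hv | hvne
    · subst hv
      rw [List.append_nil] at hf
      rw [List.getLast?_eq_getLast hcne] at hf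
      simp only [Option.mem_def, Option.some.injEq] at hf
      have hcl := cyc_closure S ⟨hne, hp, hc⟩ (by simp [hσne])
      have h1 : (σ ++ ([] : List S.Arr)).getLast (by simp [hσne]) = σ.getLast hσne := by
        simp only [List.append_nil]
      have h2 : (σ ++ ([] : List S.Arr)).head (by simp [hσne]) = σ.head hσne := by
        simp only [List.append_nil]
      rw [h1, h2] at hcl
      rw [← he, ← hf, hlasts, hheads]
      exact hcl
    · have hflast : (c ++ v).getLast? = some (v.getLast hvne) := by
        rw [List.getLast?_append_of_ne_nil _ hvne]
        exact List.getLast?_eq_getLast hvne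
      rw [hflast] at hf
      simp only [Option.mem_def, Option.some.injEq] at hf
      have hcl := cyc_closure S ⟨hne, hp, hc⟩ (by simp [hσne])
      have h1 : (σ ++ v).getLast (by simp [hσne]) = v.getLast hvne :=
        List.getLast_append_of_ne_nil _ hvne
      have h2 : (σ ++ v).head (by simp [hσne]) = σ.head hσne := by
        cases σ with
        | nil => exact absurd rfl hσne
        | cons x t => simp
      rw [h1, h2] at hcl
      rw [← he, ← hf, hheads]
      exact hcl

/-- The base of the weight function. -/
def BB (T : BFZe) : ℕ := (T.n + T.r + 1).toNat + 1

/-- The measure of a list of arrows: the sum of `B^(source)` over its arrows. -/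
def mu (T : BFZe) (W : List T.Arr) : ℕ :=
  (W.map (fun e => T.BB ^ (T.asrc e + T.r).toNat)).sum

lemma BB_pos : 0 < S.BB := by
  rw [BB]; omega

lemma mu_append (X Y : List S.Arr) : S.mu (X ++ Y) = S.mu X + S.mu Y := by
  rw [mu, mu, mu, List.map_append, List.sum_append]

lemma mu_rotate (W : List S.Arr) (j : ℕ) : S.mu (W.rotate j) = S.mu W := by
  rw [mu, mu, List.map_rotate]
  exact (List.rotate_perm _ _).sum_eq

lemma mu_ge {W : List S.Arr} {e : S.Arr} (he : e ∈ W) :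
    S.BB ^ (S.asrc e + S.r).toNat ≤ S.mu W :=
  List.single_le_sum (fun _ _ => Nat.zero_le _) _ (List.mem_map_of_mem he)

lemma mu_le {W : List S.Arr} {k : ℤ} (h : ∀ e ∈ W, S.asrc e ≤ k) :
    S.mu W ≤ W.length * S.BB ^ ((k + S.r).toNat) := by
  rw [mu]
  have hb := List.sum_le_card_nsmul (W.map fun e => S.BB ^ (S.asrc e + S.r).toNat)
    (S.BB ^ (k + S.r).toNat) ?_
  · simpa [smul_eq_mul] using hb
  · intro x hx
    obtain ⟨e, he, rfl⟩ := List.mem_map.mp hx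
    refine Nat.pow_le_pow_right (BB_pos S) ?_
    exact Int.toNat_le_toNat (by have := h e he; omega)

lemma face_length_le (hS : S.Valid) {L : List S.Arr} (hnd : (L.map S.asrc).Nodup) :
    L.length ≤ (S.n + S.r + 1).toNat := by
  classical
  have h1 : (L.map S.asrc).toFinset.card = (L.map S.asrc).length :=
    List.toFinset_card_of_nodup hnd
  have h2 : (L.map S.asrc).toFinset ⊆ Finset.Icc (-S.r) S.n := by
    intro x hx
    rw [List.mem_toFinset] at hx
    obtain ⟨e, he, rfl⟩ := List.mem_map.mp hx
    have hidx := arrow_src_idx S hS e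
    rw [Finset.mem_Icc]
    exact ⟨idx_lb S hS hidx, idx_ub S hS hidx⟩
  have h3 := Finset.card_le_card h2
  rw [h1, List.length_map] at h3
  rw [Int.card_Icc] at h3
  have h4 : S.n + 1 - -S.r = S.n + S.r + 1 := by ring
  rw [h4] at h3
  exact h3

lemma seg_ne (hseg : S.Seg k m a σ) : σ ≠ [] := by
  obtain ⟨e, ch, hσ, _⟩ := hseg
  rw [hσ]; simp

lemma seg_mem_m (hseg : S.Seg k m a σ) : ∃ f ∈ σ, S.asrc f = m := by
  obtain ⟨e, ch, hσ, hsrc, htgt, hincl, hchne, hch, hend, hgt, hak⟩ := hseg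
  subst hσ
  cases ch with
  | nil => exact absurd rfl hchne
  | cons c0 t => exact ⟨c0, by simp, hch.1⟩

/-- The key induction: every cyclic monomial lies in `J(S) + [cyclic span]`. -/
lemma key (hS : S.Valid) (FS : Finset (List S.Arr)) (hFS : S.FaceReps FS) :
    ∀ (N : ℕ) (W : List S.Arr), S.mu W ≤ N → S.IsCycList W →
      S.pathProd W ∈ S.jacIdeal FS (fun _ => (1:ℂ)) ⊔ S.cycSpan := by
  classical
  intro N
  induction N with
  | zero =>
    intro W hmu hW
    exfalso
    obtain ⟨e, he⟩ := List.exists_mem_of_ne_nil W hW.1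
    have h1 := mu_ge S (W := W) (e := e) he
    have h2 : 1 ≤ S.BB ^ (S.asrc e + S.r).toNat := Nat.one_le_pow _ _ (BB_pos S)
    omega
  | succ N ih =>
    intro W hmu hW
    obtain ⟨j, k, m, a, σ, v, hrot, hseg, hmax⟩ := extract S hS hW
    have hinclA := seg_inclA S hS hseg
    have hkm : k < m := hseg.choose_spec.choose_spec.2.2.2.1.2.2.2.1
    set A : S.Arr := ⟨(a, k), Or.inr hinclA⟩ with hAdef
    have hA1 : A.1 = (a, k) := rfl
    have hAs : S.asrc A = a := rfl
    have hAt : S.atgt A = k := rfl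
    have hak : a < k := hinclA.2.2.2.1
    have hface : S.IsFaceList (A :: σ) := seg_face S hS hseg hA1
    obtain ⟨R, hRFS, jR, hjR⟩ := hFS.2.1 _ hface
    have hAnotσ : A ∉ σ := seg_A_not_mem S hS hseg hA1
    obtain ⟨X, Y, hXY, hYX, hAX, hAY⟩ := rotate_split S hAnotσ jR
    have hRdec : R = X ++ A :: Y := by rw [← hjR, hXY]
    have hcR : S.cycDeriv A R = S.pathProd σ := by
      rw [hRdec, cycDeriv_eq S hAX hAY, hYX]
    have hWrot_cyc : S.IsCycList (σ ++ v) := hrot ▸ cyc_rotate S hW j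
    have hPW : S.pathProd W - S.pathProd (σ ++ v) ∈ S.cycSpan := by
      rw [← hrot]
      exact sub_rotate_mem_cycSpan S hW j
    have hμrot : S.mu (σ ++ v) = S.mu W := by rw [← hrot]; exact mu_rotate S W j
    -- the Jacobian term
    have hJ : S.potDeriv FS (fun _ => 1) A * S.pathProd v ∈ S.jacIdeal FS (fun _ => 1) :=
      Submodule.subset_span ⟨1, S.pathProd v, A, by rw [one_mul]⟩
    have hpot : S.potDeriv FS (fun _ => 1) A =
        S.cycDeriv A R + ∑ L ∈ FS.erase R, S.cycDeriv A L := by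
      rw [potDeriv]
      simp only [one_smul]
      exact (Finset.add_sum_erase _ _ hRFS).symm
    -- the remaining face terms, by induction
    have hrest : ∀ L ∈ FS.erase R, S.cycDeriv A L * S.pathProd v ∈
        S.jacIdeal FS (fun _ => (1:ℂ)) ⊔ S.cycSpan := by
      intro L hL
      have hLFS : L ∈ FS := Finset.mem_of_mem_erase hL
      have hLne : L ≠ R := Finset.ne_of_mem_erase hL
      by_cases hAL : A ∈ L
      case neg =>
        rw [cycDeriv_eq_zero S hAL, zero_mul]
        exact Submodule.zero_mem _
      case pos =>
        have hLface := hFS.1 L hLFS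
        rcases face_contains S hS hLface hseg hA1 hAL with ⟨i, hi⟩ | hbound
        · exfalso
          have hrotR : ∃ j', L.rotate j' = R :=
            ⟨i + jR, by rw [← List.rotate_rotate, hi, hjR]⟩
          exact hLne (hFS.2.2 L hLFS R hRFS hrotR)
        · obtain ⟨X', Y', hL', hAX', hAY'⟩ := mem_split_unique S hLface.2.1 hAL
          have hcL : S.cycDeriv A L = S.pathProd (Y' ++ X') := by
            rw [hL', cycDeriv_eq S hAX' hAY']
          have hLcyc : S.IsCycList L := hLface.1
          have hcomp_ne : Y' ++ X' ≠ [] := by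
            intro hcon
            obtain ⟨hY'nil, hX'nil⟩ := List.append_eq_nil_iff.mp hcon
            subst hY'nil hX'nil
            simp only [List.nil_append] at hL'
            subst hL'
            have hcl := hLcyc.2.2 A rfl A (by simp)
            rw [hAs, hAt] at hcl
            omega
          have hcp := comp_path S (X := X') (Y := Y') (hL' ▸ hLcyc)
          have hcyc' : S.IsCycList ((Y' ++ X') ++ v) := by
            refine cyc_glue S hWrot_cyc (seg_ne S hseg) hcomp_ne hcp.1 ?_ ?_
            · intro e he f hf
              rw [hcp.2.1 e he, seg_head_src S hS hseg f hf, hAt]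
            · intro e he f hf
              rw [hcp.2.2 e he, seg_getLast_tgt S hS hseg f hf, hAs]
          -- the measure decreases
          have hsles : ∀ f ∈ Y' ++ X', S.asrc f ≤ k := by
            intro f hf
            refine hbound f ?_
            rw [hL']
            rcases List.mem_append.mp hf with h | h
            · exact List.mem_append_right _ (List.mem_cons_of_mem _ h)
            · exact List.mem_append_left _ h
          have hlen : (Y' ++ X').length ≤ S.BB - 2 := by
            have := face_length_le S hS hLface.2.1
            have hlen2 : L.length = X'.length + Y'.length + 1 := by rw [hL']; simp; omega
            have hBB : S.BB = (S.n + S.r + 1).toNat + 1 := rfl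
            simp only [List.length_append]
            omega
          have hmucomp : S.mu (Y' ++ X') < S.mu σ := by
            have h1 : S.mu (Y' ++ X') ≤ (Y' ++ X').length * S.BB ^ ((k + S.r).toNat) :=
              mu_le S hsles
            obtain ⟨f, hfσ, hfm⟩ := seg_mem_m S hseg
            have h2 : S.BB ^ ((m + S.r).toNat) ≤ S.mu σ := by
              have := mu_ge S hfσ
              rw [hfm] at this
              exact this
            have h3 : (k + S.r).toNat + 1 ≤ (m + S.r).toNat := by
              have hkr := idx_lb S hS hinclA.2.1
              omega
            have h4 : S.BB ^ ((k + S.r).toNat + 1) ≤ S.BB ^ ((m + S.r).toNat) :=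
              Nat.pow_le_pow_right (BB_pos S) h3
            have h5 : (Y' ++ X').length * S.BB ^ ((k + S.r).toNat) <
                S.BB ^ ((k + S.r).toNat + 1) := by
              rw [pow_succ]
              have hpow : 0 < S.BB ^ ((k + S.r).toNat) := Nat.pow_pos (BB_pos S)
              have hbb2 : 2 ≤ S.BB := by rw [BB]; have := hS.1; have := hS.2.1; omega
              calc (Y' ++ X').length * S.BB ^ ((k + S.r).toNat)
                  ≤ (S.BB - 2) * S.BB ^ ((k + S.r).toNat) :=
                    Nat.mul_le_mul_right _ hlen
                _ < S.BB ^ ((k + S.r).toNat) * S.BB := by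
                    rw [mul_comm (S.BB ^ ((k + S.r).toNat)) S.BB]
                    exact Nat.mul_lt_mul_of_lt_of_le (by omega) (le_refl _) hpow
            omega
          have hμ' : S.mu ((Y' ++ X') ++ v) ≤ N := by
            rw [mu_append]
            rw [mu_append] at hμrot
            omega
          have hIH := ih _ hμ' hcyc'
          rw [pathProd_append S (Y' ++ X') v] at hIH
          rw [hcL]
          exact hIH
    -- combine everything
    have hσv : S.pathProd σ * S.pathProd v ∈ S.jacIdeal FS (fun _ => (1:ℂ)) ⊔ S.cycSpan := by
      have heq : S.potDeriv FS (fun _ => 1) A * S.pathProd v -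
          ∑ L ∈ FS.erase R, S.cycDeriv A L * S.pathProd v =
          S.pathProd σ * S.pathProd v := by
        rw [hpot, hcR, add_mul, ← Finset.sum_mul, add_sub_cancel_right]
      rw [← heq]
      exact Submodule.sub_mem _ (Submodule.mem_sup_left hJ) (Submodule.sum_mem _ hrest)
    have hfinal : S.pathProd W =
        (S.pathProd W - S.pathProd (σ ++ v)) + S.pathProd σ * S.pathProd v := by
      rw [← pathProd_append]
      exact (sub_add_cancel _ _).symm
    rw [hfinal]
    exact Submodule.add_mem _ (Submodule.mem_sup_right hPW) hσv

/-- For any symmetric Kac–Moody Dynkin diagram `Γ` and any Weyl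
group element `u` with reduced word `i`, there is a sign function `ε` assigning `+1`
or `-1` to each face of the BFZ quiver `Q^{u,e}` such that the potential
`S = ∑_F ε(F) • w_F` (the signed sum of the faces, i.e. the superpotential `clockwise
faces minus anticlockwise faces`) is rigid: every cyclic monomial of `Q^{u,e}` is
cyclically equivalent to an element of the Jacobian ideal `J(S)`. -/
theorem exists_rigid_superpotential (hS : S.Valid) (hred : S.Reduced)
    (FS : Finset (List S.Arr)) (hFS : S.FaceReps FS) :
    ∃ eps : List S.Arr → ℂ,
      (∀ L ∈ FS, eps L = 1 ∨ eps L = -1) ∧ S.IsRigid FS eps := by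
  refine ⟨fun _ => 1, fun L _ => Or.inl rfl, ?_⟩
  intro L hL
  have hkey := key S hS FS hFS (S.mu L) L le_rfl hL
  rw [Submodule.mem_sup] at hkey
  obtain ⟨y, hy, z, hz, hyz⟩ := hkey
  refine ⟨y, hy, ?_⟩
  rw [← hyz, add_sub_cancel_left]
  exact hz

end BFZe
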